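/- The Kantorovich–Rubinstein norm N induced on the zero-sum hyperplane H by the 1-Wasserstein distance (with ground metric d on a finite set S with at least 3 points, d not identically 0 off the diagonal) is not strictly convex: its unit sphere contains a nondegenerate line segment. -/

import Mathlib

/-- The Kantorovich–Rubinstein norm on the zero-sum hyperplane of `ℝ^S`: the optimal cost of
transporting the positive part `v⁺` of `v` onto its negative part `v⁻`, with ground cost `d`. -/
noncomputable def KR {S : Type*} [Fintype S] (d : S → S → ℝ) (v : S → ℝ) : ℝ :=
  sInf {c | ∃ A : S → S → ℝ, (∀ r r', 0 ≤ A r r') ∧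
    (∀ r, ∑ r', A r r' = max (v r) 0) ∧
    (∀ r', ∑ r, A r r' = max (-v r') 0) ∧
    c = ∑ r, ∑ r', A r r' * d r r'}

lemma sum_three {S : Type*} [Fintype S] [DecidableEq S]
    (a b c : S) (hab : a ≠ b) (hac : a ≠ c) (hbc : b ≠ c) (x y z : ℝ) :
    ∑ s : S, (if s = a then x else if s = b then y else if s = c then z else 0) = x + y + z := by
  have : ∀ s : S, (if s = a then x else if s = b then y else if s = c then z else 0)
      = (if s = a then x else 0) + (if s = b then y else 0) + (if s = c then z else 0) := by
    intro s
    split_ifs with h1 h2 h3 h2 h3 h3 <;> simp_all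
  rw [Finset.sum_congr rfl (fun s _ => this s)]
  rw [Finset.sum_add_distrib, Finset.sum_add_distrib]
  simp

lemma KR_three {S : Type*} [Fintype S] [DecidableEq S] (d : S → S → ℝ)
    (a b c : S) (hab : a ≠ b) (hac : a ≠ c) (hbc : b ≠ c)
    (α β : ℝ) (hα : 0 ≤ α) (hβ : 0 ≤ β) :
    KR d (fun s => if s = a then α else if s = b then β else if s = c then -(α+β) else 0)
      = α * d a c + β * d b c := by
  set v : S → ℝ := fun s => if s = a then α else if s = b then β else if s = c then -(α+β) else 0
    with hv
  have hvc : v c = -(α+β) := by simp [hv, hac.symm, hbc.symm]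
  have hva : v a = α := by simp [hv]
  have hvb : v b = β := by simp [hv, hab.symm]
  have hset : {c' | ∃ A : S → S → ℝ, (∀ r r', 0 ≤ A r r') ∧
      (∀ r, ∑ r', A r r' = max (v r) 0) ∧
      (∀ r', ∑ r, A r r' = max (-v r') 0) ∧
      c' = ∑ r, ∑ r', A r r' * d r r'} = {α * d a c + β * d b c} := by
    apply Set.eq_singleton_iff_unique_mem.mpr
    constructor
    · -- membership: explicit plan
      refine ⟨fun r r' => (if r = a then α else if r = b then β else 0) *
        (if r' = c then 1 else 0), ?_, ?_, ?_, ?_⟩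
      · intro r r'
        apply mul_nonneg <;> split_ifs <;> norm_num <;> assumption
      · intro r
        rw [← Finset.mul_sum]
        have h1 : ∑ r' : S, (if r' = c then (1:ℝ) else 0) = 1 := by simp
        rw [h1, mul_one, hv]
        by_cases h : r = a
        · subst h; simp [max_eq_left hα]
        · by_cases h' : r = b
          · subst h'; simp [h, max_eq_left hβ]
          · by_cases h'' : r = c
            · subst h''; simp [h, h']
              linarith
            · simp [h, h', h'']
      · intro r'
        rw [← Finset.sum_mul]
        have h1 : ∑ r : S, (if r = a then α else if r = b then β else 0) = α + β := by
          have := sum_three a b c hab hac hbc α β 0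
          simpa using this
        rw [h1, hv]
        by_cases h : r' = c
        · subst h; simp [Ne.symm hac, Ne.symm hbc]
          linarith
        · by_cases h' : r' = a
          · subst h'; simp [h, max_eq_right (neg_nonpos_of_nonneg hα)]
          · by_cases h'' : r' = b
            · subst h''; simp [h, h', max_eq_right (neg_nonpos_of_nonneg hβ)]
            · simp [h, h', h'']
      · have hin : ∀ r : S, ∑ r' : S, ((if r = a then α else if r = b then β else 0) *
            (if r' = c then 1 else 0)) * d r r'
            = (if r = a then α * d a c else if r = b then β * d b c else 0) := by
          intro r
          have : ∀ r' : S, ((if r = a then α else if r = b then β else 0) *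
              (if r' = c then 1 else 0)) * d r r'
              = (if r' = c then (if r = a then α else if r = b then β else 0) * d r c else 0) := by
            intro r'
            by_cases hr : r' = c
            · subst hr; simp
            · simp [hr]
          rw [Finset.sum_congr rfl (fun r' _ => this r')]
          simp only [Finset.sum_ite_eq', Finset.mem_univ, if_true]
          by_cases h1 : r = a
          · subst h1; simp
          · by_cases h2 : r = b
            · subst h2; simp [h1]
            · simp [h1, h2]
        rw [Finset.sum_congr rfl (fun r _ => hin r)]
        have := sum_three a b c hab hac hbc (α * d a c) (β * d b c) 0
        have h2 : ∀ s : S, (if s = a then α * d a c else if s = b then β * d b c else 0)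
            = (if s = a then α * d a c else if s = b then β * d b c else if s = c then 0 else 0) := by
          intro s; split_ifs <;> rfl
        rw [Finset.sum_congr rfl (fun s _ => h2 s), this]
        ring
    · -- uniqueness
      rintro c' ⟨A, hA0, hrow, hcol, rfl⟩
      have hoff : ∀ r' : S, r' ≠ c → ∀ r : S, A r r' = 0 := by
        intro r' hr' r
        have hc : ∑ r, A r r' = 0 := by
          rw [hcol r']
          by_cases h : r' = a
          · subst h; rw [hva, max_eq_right (neg_nonpos_of_nonneg hα)]
          · by_cases h' : r' = b
            · subst h'; rw [hvb, max_eq_right (neg_nonpos_of_nonneg hβ)]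
            · simp [hv, h, h', hr']
        exact (Finset.sum_eq_zero_iff_of_nonneg (fun i _ => hA0 i r')).mp hc r (Finset.mem_univ r)
      have hoffr : ∀ r : S, r ≠ a → r ≠ b → ∀ r' : S, A r r' = 0 := by
        intro r hra hrb r'
        have hc : ∑ r', A r r' = 0 := by
          rw [hrow r]
          by_cases h : r = c
          · rw [h, hvc]; rw [max_eq_right]; linarith
          · simp [hv, hra, hrb, h]
        exact (Finset.sum_eq_zero_iff_of_nonneg (fun i _ => hA0 r i)).mp hc r' (Finset.mem_univ r')
      have hAac : A a c = α := by
        have := hrow a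
        rw [hva, max_eq_left hα] at this
        rw [← this]
        exact (Finset.sum_eq_single c (fun r' _ hr' => hoff r' hr' a)
          (fun h => absurd (Finset.mem_univ c) h)).symm
      have hAbc : A b c = β := by
        have := hrow b
        rw [hvb, max_eq_left hβ] at this
        rw [← this]
        exact (Finset.sum_eq_single c (fun r' _ hr' => hoff r' hr' b)
          (fun h => absurd (Finset.mem_univ c) h)).symm
      have hin : ∀ r : S, ∑ r' : S, A r r' * d r r' = A r c * d r c := by
        intro r
        exact Finset.sum_eq_single c (fun r' _ hr' => by rw [hoff r' hr' r, zero_mul])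
          (fun h => absurd (Finset.mem_univ c) h)
      rw [Finset.sum_congr rfl (fun r _ => hin r)]
      have hterm : ∀ r : S, A r c * d r c
          = (if r = a then α * d a c else if r = b then β * d b c else if r = c then 0 else 0) := by
        intro r
        by_cases h : r = a
        · subst h; simp [hAac]
        · by_cases h' : r = b
          · subst h'; simp [h, hAbc]
          · simp [h, h', hoffr r h h' c]
      rw [Finset.sum_congr rfl (fun r _ => hterm r),
        sum_three a b c hab hac hbc (α * d a c) (β * d b c) 0]
      ring
  rw [KR, hset, csInf_singleton]

/-- The Kantorovich–Rubinstein norm on the zero-sum hyperplane (ground metric `d` on a finite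
set with at least 3 points, `d` not identically zero off the diagonal) is not strictly convex:
its unit sphere contains a nondegenerate line segment. -/
theorem stmt8 {S : Type*} [Fintype S] (hcard : 3 ≤ Fintype.card S)
    (d : S → S → ℝ)
    (hd0 : ∀ r r', 0 ≤ d r r') (hdrefl : ∀ r, d r r = 0)
    (hdsymm : ∀ r r', d r r' = d r' r)
    (hdtri : ∀ r r' r'', d r r'' ≤ d r r' + d r' r'')
    (hdsep : ∀ r r', d r r' = 0 → r = r')
    (hdne : ∃ s t : S, s ≠ t ∧ d s t ≠ 0) :
    ∃ u v : S → ℝ, u ≠ v ∧ (∑ s, u s = 0) ∧ (∑ s, v s = 0) ∧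
      KR d u = 1 ∧ KR d v = 1 ∧
      ∀ t : ℝ, 0 ≤ t → t ≤ 1 → KR d ((1 - t) • u + t • v) = 1 := by
  classical
  -- get three distinct points
  obtain ⟨f⟩ : Nonempty (Fin 3 ↪ S) := by
    rw [Function.Embedding.nonempty_iff_card_le]
    simpa using hcard
  set a := f 0; set b := f 1; set c := f 2
  have hab : a ≠ b := fun h => by simpa using f.injective h
  have hac : a ≠ c := fun h => by simpa using f.injective h
  have hbc : b ≠ c := fun h => by simpa using f.injective h
  have hdac : 0 < d a c := lt_of_le_of_ne (hd0 a c) (fun h => hac (hdsep a c h.symm))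
  have hdbc : 0 < d b c := lt_of_le_of_ne (hd0 b c) (fun h => hbc (hdsep b c h.symm))
  set α₀ : ℝ := 1 / d a c with hα₀
  set β₀ : ℝ := 1 / d b c with hβ₀
  have hα₀pos : 0 < α₀ := by positivity
  have hβ₀pos : 0 < β₀ := by positivity
  refine ⟨fun s => if s = a then α₀ else if s = b then 0 else if s = c then -(α₀+0) else 0,
    fun s => if s = a then 0 else if s = b then β₀ else if s = c then -(0+β₀) else 0,
    ?_, ?_, ?_, ?_, ?_, ?_⟩
  · intro h
    have := congrFun h a
    simp at this
    linarith
  · rw [sum_three a b c hab hac hbc]; ring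
  · rw [sum_three a b c hab hac hbc]; ring
  · rw [KR_three d a b c hab hac hbc α₀ 0 hα₀pos.le le_rfl, hα₀]
    field_simp
    ring
  · rw [KR_three d a b c hab hac hbc 0 β₀ le_rfl hβ₀pos.le, hβ₀]
    field_simp
    ring
  · intro t ht0 ht1
    have heq : ((1 - t) • (fun s => if s = a then α₀ else if s = b then 0 else if s = c then -(α₀+0) else 0)
        + t • (fun s => if s = a then 0 else if s = b then β₀ else if s = c then -(0+β₀) else 0) : S → ℝ)
        = fun s => if s = a then (1-t)*α₀ else if s = b then t*β₀ else if s = c then -((1-t)*α₀+t*β₀) else 0 := by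
      funext s
      simp only [Pi.add_apply, Pi.smul_apply, smul_eq_mul]
      split_ifs <;> ring
    rw [heq, KR_three d a b c hab hac hbc ((1-t)*α₀) (t*β₀)
      (mul_nonneg (by linarith) hα₀pos.le) (mul_nonneg ht0 hβ₀pos.le)]
    rw [hα₀, hβ₀]
    have h1 := hdac.ne'
    have h2 := hdbc.ne'
    field_simp
    ring
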